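/- Let L be a Lie algebra over a field K. (1) If I is a finite-dimensional ideal of L, then Δ(L/I) = (Δ(L) + I)/I; that is, Δ(L/I) is exactly the image of Δ(L) under the quotient map L → L/I. (2) If H is a Lie subalgebra of finite codimension in L (as a K-subspace), then Δ(H) = Δ(L) ∩ H, where Δ(H) is computed inside the Lie algebra H. -/

import Mathlib

/-- The delta-set of a Lie algebra `L`: the set of elements `x ∈ L` of finite width, i.e.
such that `[L, x]` is finite dimensional. -/
def deltaSet (K L : Type*) [Field K] [LieRing L] [LieAlgebra K L] : Set L :=
  {x : L | FiniteDimensional K (Submodule.span K {z : L | ∃ y : L, z = ⁅y, x⁆})}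

section Aux

variable {K : Type*} [Field K] {M M₂ : Type*} [AddCommGroup M] [Module K M]
  [AddCommGroup M₂] [Module K M₂]

lemma fd_ext (N : Submodule K M) [FiniteDimensional K N] [FiniteDimensional K (M ⧸ N)] :
    FiniteDimensional K M := by
  obtain ⟨W, hW⟩ := Submodule.exists_isCompl N
  have : FiniteDimensional K W :=
    (Submodule.quotientEquivOfIsCompl N W hW).finiteDimensional
  exact (Submodule.prodEquivOfIsCompl N W hW).finiteDimensional

lemma fd_of_ker_range (f : M →ₗ[K] M₂) [FiniteDimensional K (LinearMap.ker f)]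
    [FiniteDimensional K (LinearMap.range f)] : FiniteDimensional K M := by
  have : FiniteDimensional K (M ⧸ LinearMap.ker f) :=
    (f.quotKerEquivRange).symm.finiteDimensional
  exact fd_ext (LinearMap.ker f)

lemma fd_comap_mkQ (I : Submodule K M) [FiniteDimensional K I]
    (W : Submodule K (M ⧸ I)) [FiniteDimensional K W] :
    FiniteDimensional K (W.comap I.mkQ) := by
  set V := W.comap I.mkQ
  have hIV : I ≤ V := by
    intro x hx
    simp [V, Submodule.mem_comap, Submodule.mkQ_apply,
      (Submodule.Quotient.mk_eq_zero I).2 hx]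
  set f : V →ₗ[K] M ⧸ I := I.mkQ.comp V.subtype with hf
  have hker : LinearMap.ker f = Submodule.comap V.subtype I := by
    rw [hf, LinearMap.ker_comp, Submodule.ker_mkQ]
  have : FiniteDimensional K (LinearMap.ker f) := by
    rw [hker]
    exact (Submodule.comapSubtypeEquivOfLe hIV).symm.finiteDimensional
  have hrange : LinearMap.range f ≤ W := by
    rintro _ ⟨⟨v, hv⟩, rfl⟩
    exact hv
  have : FiniteDimensional K (LinearMap.range f) :=
    Submodule.finiteDimensional_of_le hrange
  exact fd_of_ker_range f

end Aux

section Main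

variable (K L : Type*) [Field K] [LieRing L] [LieAlgebra K L]

/-- Right adjoint action `y ↦ ⁅y, x⁆` as a linear map. -/
def adRight (x : L) : L →ₗ[K] L where
  toFun y := ⁅y, x⁆
  map_add' y z := add_lie y z x
  map_smul' c y := smul_lie c y x

lemma span_eq_range (x : L) :
    Submodule.span K {z : L | ∃ y : L, z = ⁅y, x⁆} = LinearMap.range (adRight K L x) := by
  have h : {z : L | ∃ y : L, z = ⁅y, x⁆} = Set.range (adRight K L x) := by
    ext z
    simp [adRight, Set.range, eq_comm]
  rw [h, ← LinearMap.coe_range, Submodule.span_eq]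

lemma mem_deltaSet_iff (x : L) :
    x ∈ deltaSet K L ↔ FiniteDimensional K (LinearMap.range (adRight K L x)) := by
  unfold deltaSet
  rw [Set.mem_setOf_eq, span_eq_range]

end Main
/-- Riley–Shalev: (1) if `I` is a finite-dimensional ideal of a Lie algebra `L`, then
`Δ(L/I) = (Δ(L) + I)/I`, i.e. `Δ(L/I)` is the image of `Δ(L)` under the quotient map; and
(2) if `H` is a subalgebra of finite codimension in `L`, then `Δ(H) = Δ(L) ∩ H`. -/
theorem deltaSet_quotient_and_subalgebra
    (K L : Type*) [Field K] [LieRing L] [LieAlgebra K L] :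
    (∀ I : LieIdeal K L, FiniteDimensional K I →
      deltaSet K (L ⧸ I) =
        (LieSubmodule.Quotient.mk (N := I)) '' deltaSet K L) ∧
    (∀ H : LieSubalgebra K L, FiniteDimensional K (L ⧸ H.toSubmodule) →
      deltaSet K H = ((↑) : H → L) ⁻¹' deltaSet K L) := by
  constructor
  · intro I hI
    ext z
    constructor
    · intro hz
      obtain ⟨x, rfl⟩ := Submodule.Quotient.mk_surjective I.toSubmodule z
      refine ⟨x, ?_, rfl⟩
      -- hz : FD of span of S_{mk x}
      have hz' : FiniteDimensional K
          (Submodule.span K {w : L ⧸ I | ∃ y : L ⧸ I, w = ⁅y, Submodule.Quotient.mk x⁆}) := hz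
      have hle : Submodule.span K {z : L | ∃ y : L, z = ⁅y, x⁆} ≤
          Submodule.comap I.toSubmodule.mkQ
            (Submodule.span K {w : L ⧸ I | ∃ y : L ⧸ I, w = ⁅y, Submodule.Quotient.mk x⁆}) := by
        rw [Submodule.span_le]
        rintro _ ⟨y, rfl⟩
        refine Submodule.subset_span ⟨Submodule.Quotient.mk y, ?_⟩
        rfl
      have := fd_comap_mkQ I.toSubmodule
        (Submodule.span K {w : L ⧸ I | ∃ y : L ⧸ I, w = ⁅y, Submodule.Quotient.mk x⁆})
      exact Submodule.finiteDimensional_of_le hle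
    · rintro ⟨x, hx, rfl⟩
      have hx' : FiniteDimensional K
          (Submodule.span K {z : L | ∃ y : L, z = ⁅y, x⁆}) := hx
      show FiniteDimensional K
        (Submodule.span K {w : L ⧸ I | ∃ y : L ⧸ I, w = ⁅y, LieSubmodule.Quotient.mk (N := I) x⁆})
      have h : {w : L ⧸ I | ∃ y : L ⧸ I, w = ⁅y, LieSubmodule.Quotient.mk (N := I) x⁆} =
          I.toSubmodule.mkQ '' {z : L | ∃ y : L, z = ⁅y, x⁆} := by
        ext w
        constructor
        · rintro ⟨y, rfl⟩
          obtain ⟨y', rfl⟩ := Submodule.Quotient.mk_surjective I.toSubmodule y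
          exact ⟨⁅y', x⁆, ⟨y', rfl⟩, rfl⟩
        · rintro ⟨_, ⟨y, rfl⟩, rfl⟩
          exact ⟨Submodule.Quotient.mk y, rfl⟩
      rw [h, Submodule.span_image I.toSubmodule.mkQ]
      exact Module.Finite.map _ _
  · intro H hH
    ext x
    constructor
    · intro hx
      have hx' : FiniteDimensional K
          (Submodule.span K {z : H | ∃ y : H, z = ⁅y, x⁆}) := hx
      show FiniteDimensional K (Submodule.span K {z : L | ∃ y : L, z = ⁅y, (x : L)⁆})
      obtain ⟨W, hW⟩ := Submodule.exists_isCompl H.toSubmodule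
      have hWfd : FiniteDimensional K W :=
        (Submodule.quotientEquivOfIsCompl H.toSubmodule W hW).finiteDimensional
      have hle : Submodule.span K {z : L | ∃ y : L, z = ⁅y, (x : L)⁆} ≤
          (Submodule.map H.toSubmodule.subtype
            (Submodule.span K {z : H | ∃ y : H, z = ⁅y, x⁆})) ⊔
          (Submodule.map (adRight K L (x : L)) W) := by
        rw [Submodule.span_le]
        rintro _ ⟨y, rfl⟩
        obtain ⟨h, w, hh, hw, hhw⟩ :=
          Submodule.codisjoint_iff_exists_add_eq.mp hW.codisjoint y
        rw [← hhw, add_lie]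
        refine Submodule.add_mem _ ?_ ?_
        · exact Submodule.mem_sup_left ⟨⁅(⟨h, hh⟩ : H), x⁆,
            Submodule.subset_span ⟨⟨h, hh⟩, rfl⟩, rfl⟩
        · exact Submodule.mem_sup_right ⟨w, hw, rfl⟩
      have : FiniteDimensional K (Submodule.map H.toSubmodule.subtype
          (Submodule.span K {z : H | ∃ y : H, z = ⁅y, x⁆})) := Module.Finite.map _ _
      have : FiniteDimensional K (Submodule.map (adRight K L (x : L)) W) :=
        Module.Finite.map _ _
      exact Submodule.finiteDimensional_of_le hle
    · intro hx
      have hx' : FiniteDimensional K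
          (Submodule.span K {z : L | ∃ y : L, z = ⁅y, (x : L)⁆}) := hx
      show FiniteDimensional K (Submodule.span K {z : H | ∃ y : H, z = ⁅y, x⁆})
      set p := Submodule.span K {z : H | ∃ y : H, z = ⁅y, x⁆}
      have hinj : Function.Injective H.toSubmodule.subtype := Subtype.coe_injective
      have hmaple : Submodule.map H.toSubmodule.subtype p ≤
          Submodule.span K {z : L | ∃ y : L, z = ⁅y, (x : L)⁆} := by
        rw [Submodule.map_span, Submodule.span_le]
        rintro _ ⟨_, ⟨y, rfl⟩, rfl⟩
        exact Submodule.subset_span ⟨(y : L), rfl⟩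
      have : FiniteDimensional K (Submodule.map H.toSubmodule.subtype p) :=
        Submodule.finiteDimensional_of_le hmaple
      exact (Submodule.equivMapOfInjective _ hinj p).symm.finiteDimensional
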